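/- Mean value via ball averages: for every almost periodic function u : ℝ^N → ℝ there exists a real constant c such that the averages (1/|B_r(a)|) ∫_{B_r(a)} u(y) dy converge to c as r → ∞, uniformly with respect to the center a ∈ ℝ^N; in particular the limit c does not depend on a. -/

import Mathlib

open BoundedContinuousFunction MeasureTheory

/-- The translate `u(· + a)` of a bounded continuous function on `ℝ^N`. -/
noncomputable def RTranslate {N : ℕ} (u : EuclideanSpace ℝ (Fin N) →ᵇ ℝ)
    (a : EuclideanSpace ℝ (Fin N)) : EuclideanSpace ℝ (Fin N) →ᵇ ℝ :=
  u.compContinuous ⟨fun y => y + a, by continuity⟩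

open Metric Set

namespace MVAux

variable {N : ℕ}

local notation "E" => EuclideanSpace ℝ (Fin N)

/-- normalized ball volume -/
noncomputable def V (N : ℕ) (r : ℝ) : ℝ :=
  (volume (ball (0 : EuclideanSpace ℝ (Fin N)) r)).toReal

lemma vol_center (a : E) (r : ℝ) : volume (ball a r) = volume (ball (0 : E) r) :=
  Measure.addHaar_ball_center volume a r

lemma vol_ne_top (a : E) (r : ℝ) : volume (ball a r) ≠ ⊤ := measure_ball_lt_top.ne

lemma V_nonneg (r : ℝ) : 0 ≤ V N r := ENNReal.toReal_nonneg

lemma V_pos (hN : 0 < N) {r : ℝ} (hr : 0 < r) : 0 < V N r := by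
  haveI : Nontrivial (EuclideanSpace ℝ (Fin N)) :=
    Module.finrank_pos_iff (R := ℝ) |>.mp (by rw [finrank_euclideanSpace_fin]; exact hN)
  exact ENNReal.toReal_pos (measure_ball_pos volume 0 hr).ne' (vol_ne_top 0 r)

lemma V_mono {r r' : ℝ} (h : r ≤ r') : V N r ≤ V N r' :=
  ENNReal.toReal_mono (vol_ne_top 0 r') (measure_mono (ball_subset_ball h))

lemma V_scale (hN : 0 < N) {r : ℝ} (hr : 0 ≤ r) : V N r = r ^ N * V N 1 := by
  haveI : Nontrivial (EuclideanSpace ℝ (Fin N)) :=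
    Module.finrank_pos_iff (R := ℝ) |>.mp (by rw [finrank_euclideanSpace_fin]; exact hN)
  unfold V
  rw [Measure.addHaar_ball volume 0 hr, ENNReal.toReal_mul, ENNReal.toReal_ofReal (by positivity),
    finrank_euclideanSpace_fin]

lemma u_intOn (u : E →ᵇ ℝ) {s : Set (EuclideanSpace ℝ (Fin N))} (hs : volume s ≠ ⊤) :
    IntegrableOn (fun y => u y) s volume :=
  Measure.integrableOn_of_bounded hs u.continuous.aestronglyMeasurable
    (Filter.Eventually.of_forall fun x => u.norm_coe_le_norm x)


/-- the ball average -/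
noncomputable def g {N : ℕ} (u : EuclideanSpace ℝ (Fin N) →ᵇ ℝ) (r : ℝ)
    (a : EuclideanSpace ℝ (Fin N)) : ℝ :=
  (volume (ball a r)).toReal⁻¹ * ∫ y in ball a r, u y

lemma g_def (u : E →ᵇ ℝ) (r : ℝ) (a : E) :
    g u r a = (V N r)⁻¹ * ∫ y in ball a r, u y := by
  rw [g, vol_center]; rfl

lemma integral_translate (u : E →ᵇ ℝ) (a : E) (r : ℝ) :
    ∫ y in ball a r, u y = ∫ y in ball (0 : E) r, u (y + a) := by
  have h1 : MeasurePreserving (fun y : E => y + a) volume volume :=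
    measurePreserving_add_right volume a
  have h2 : MeasurableEmbedding (fun y : E => y + a) :=
    (MeasurableEquiv.addRight a).measurableEmbedding
  have h3 : (fun y : E => y + a) ⁻¹' ball a r = ball (0 : E) r := by
    ext y
    simp [mem_ball, dist_eq_norm]
  rw [← h3, h1.setIntegral_preimage_emb h2]

/-- averages are bounded by a sup bound -/
lemma abs_setIntegral_le (u : E →ᵇ ℝ) {s : Set (EuclideanSpace ℝ (Fin N))} {C : ℝ}
    (hs : volume s ≠ ⊤) (hC : ∀ x, |u x| ≤ C) :
    |∫ y in s, u y| ≤ C * (volume s).toReal := by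
  have := norm_setIntegral_le_of_norm_le_const (μ := volume) (s := s) (f := fun y => u y)
    (C := C) (lt_top_iff_ne_top.2 hs) (fun x _ => hC x)
  simpa [Real.norm_eq_abs, Measure.real] using this

/-- difference of integrals over nested balls -/
lemma nested_diff (u : E →ᵇ ℝ) {r' r : ℝ} (h : r' ≤ r) (a : E) {C : ℝ}
    (hC : ∀ x, |u x| ≤ C) :
    |(∫ y in ball a r, u y) - ∫ y in ball a r', u y| ≤ C * (V N r - V N r') := by
  have hsub : ball a r' ⊆ ball a r := ball_subset_ball h
  have hdiff := integral_diff (μ := volume) (f := fun y => u y) measurableSet_ball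
    (u_intOn u (vol_ne_top a r)) hsub
  rw [← hdiff]
  have hvol : volume (ball a r \ ball a r') = volume (ball a r) - volume (ball a r') :=
    measure_diff hsub measurableSet_ball.nullMeasurableSet (vol_ne_top a r')
  have hfin : volume (ball a r \ ball a r') ≠ ⊤ :=
    ((measure_mono Set.diff_subset).trans_lt measure_ball_lt_top).ne
  have := abs_setIntegral_le u hfin hC
  refine this.trans ?_
  rw [hvol, ENNReal.toReal_sub_of_le (measure_mono hsub) (vol_ne_top a r),
    vol_center a r, vol_center a r']
  exact le_refl _


/-- generalized integral bound for continuous functions -/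
lemma abs_setIntegral_le' {f : EuclideanSpace ℝ (Fin N) → ℝ} (hf : Continuous f)
    {s : Set (EuclideanSpace ℝ (Fin N))} (hs : volume s ≠ ⊤) {C : ℝ} (hC : ∀ x, |f x| ≤ C) :
    |∫ y in s, f y| ≤ C * (volume s).toReal := by
  have := norm_setIntegral_le_of_norm_le_const (μ := volume) (s := s) (f := f)
    (C := C) (lt_top_iff_ne_top.2 hs) (fun x _ => hC x)
  simpa [Real.norm_eq_abs, Measure.real] using this

/-- difference of integrals over nested balls, different centers -/
lemma nested_diff2 (u : E →ᵇ ℝ) {a b : E} {r' r : ℝ} (hsub : ball a r' ⊆ ball b r)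
    {C : ℝ} (hC : ∀ x, |u x| ≤ C) :
    |(∫ y in ball b r, u y) - ∫ y in ball a r', u y| ≤ C * (V N r - V N r') := by
  have hdiff := integral_diff (μ := volume) (f := fun y => u y) measurableSet_ball
    (u_intOn u (vol_ne_top b r)) hsub
  rw [← hdiff]
  have hfin : volume (ball b r \ ball a r') ≠ ⊤ :=
    ((measure_mono Set.diff_subset).trans_lt measure_ball_lt_top).ne
  have hvol : volume (ball b r \ ball a r') = volume (ball b r) - volume (ball a r') :=
    measure_diff hsub measurableSet_ball.nullMeasurableSet (vol_ne_top a r')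
  refine (abs_setIntegral_le u hfin hC).trans ?_
  rw [hvol, ENNReal.toReal_sub_of_le (measure_mono hsub) (vol_ne_top b r),
    vol_center b r, vol_center a r']
  exact le_refl _

lemma V_sub_nonneg {r' r : ℝ} (h : r' ≤ r) : 0 ≤ V N r - V N r' := by
  have := V_mono (N := N) h; linarith

lemma g_bound (hN : 0 < N) (u : E →ᵇ ℝ) {C : ℝ} (hC : ∀ x, |u x| ≤ C) {r : ℝ} (hr : 0 < r)
    (a : E) : |g u r a| ≤ C := by
  have hV := V_pos hN hr
  rw [g_def, abs_mul, abs_of_nonneg (inv_nonneg.2 (V_nonneg r))]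
  calc (V N r)⁻¹ * |∫ y in ball a r, u y| ≤ (V N r)⁻¹ * (C * (V N r)) := by
        refine mul_le_mul_of_nonneg_left ?_ (inv_nonneg.2 (V_nonneg r))
        have := abs_setIntegral_le u (vol_ne_top a r) hC
        rwa [vol_center] at this
    _ = C := by field_simp

lemma g_shift (hN : 0 < N) (u : E →ᵇ ℝ) {C : ℝ} (hC : ∀ x, |u x| ≤ C) {r : ℝ} (hr : 0 < r)
    (a b : E) :
    |g u r a - g u r b| ≤ 2 * C * (V N r - V N (r - dist a b)) / V N r := by
  have hV := V_pos hN hr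
  set d := dist a b with hd
  have hd0 : 0 ≤ d := dist_nonneg
  have hsub1 : ball a (r - d) ⊆ ball a r := ball_subset_ball (by linarith)
  have hsub2 : ball a (r - d) ⊆ ball b r := by
    intro y hy
    rw [mem_ball] at hy ⊢
    calc dist y b ≤ dist y a + dist a b := dist_triangle y a b
      _ < (r - d) + d := by rw [← hd]; linarith
      _ = r := by ring
  have e1 := nested_diff2 u hsub1 hC
  have e2 := nested_diff2 u hsub2 hC
  rw [g_def, g_def, ← mul_sub, abs_mul, abs_of_nonneg (inv_nonneg.2 (V_nonneg r))]
  have key : |(∫ y in ball a r, u y) - ∫ y in ball b r, u y| ≤ 2 * C * (V N r - V N (r - d)) := by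
    have : (∫ y in ball a r, u y) - ∫ y in ball b r, u y =
        ((∫ y in ball a r, u y) - ∫ y in ball a (r - d), u y) -
        ((∫ y in ball b r, u y) - ∫ y in ball a (r - d), u y) := by ring
    rw [this]
    calc _ ≤ |(∫ y in ball a r, u y) - ∫ y in ball a (r - d), u y| +
        |(∫ y in ball b r, u y) - ∫ y in ball a (r - d), u y| := abs_sub _ _
      _ ≤ C * (V N r - V N (r - d)) + C * (V N r - V N (r - d)) := add_le_add e1 e2
      _ = 2 * C * (V N r - V N (r - d)) := by ring
  calc (V N r)⁻¹ * |(∫ y in ball a r, u y) - ∫ y in ball b r, u y|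
      ≤ (V N r)⁻¹ * (2 * C * (V N r - V N (r - d))) :=
        mul_le_mul_of_nonneg_left key (inv_nonneg.2 (V_nonneg r))
    _ = 2 * C * (V N r - V N (r - d)) / V N r := by ring

lemma g_translate_est (hN : 0 < N) (u : E →ᵇ ℝ) {r : ℝ} (hr : 0 < r) (τ : E) {ε : ℝ}
    (hτ : ∀ x, |u (x + τ) - u x| ≤ ε) : |g u r τ - g u r 0| ≤ ε := by
  have hV := V_pos hN hr
  rw [g_def, g_def, integral_translate u τ r, integral_translate u 0 r]
  simp only [add_zero]
  rw [← mul_sub]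
  have hint1 : IntegrableOn (fun y => u (y + τ)) (ball (0 : E) r) volume := by
    have := u_intOn (RTranslate u τ) (hs := vol_ne_top (0 : E) r)
    exact this
  have hint2 : IntegrableOn (fun y => u y) (ball (0 : E) r) volume :=
    u_intOn u (vol_ne_top (0 : E) r)
  rw [← integral_sub hint1 hint2]
  have hb := abs_setIntegral_le' (f := fun y => u (y + τ) - u y)
    (by continuity) (vol_ne_top (0 : E) r) hτ
  rw [abs_mul, abs_of_nonneg (inv_nonneg.2 (V_nonneg r))]
  calc (V N r)⁻¹ * |∫ y in ball (0 : E) r, (u (y + τ) - u y)| ≤ (V N r)⁻¹ * (ε * V N r) := by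
        refine mul_le_mul_of_nonneg_left ?_ (inv_nonneg.2 (V_nonneg r))
        rw [vol_center] at hb; exact hb
    _ = ε := by field_simp


lemma RTranslate_apply (u : E →ᵇ ℝ) (a x : E) : RTranslate u a x = u (x + a) := rfl

/-- relative density of almost periods -/
lemma almost_periods (u : E →ᵇ ℝ)
    (hap : IsCompact (closure (Set.range (RTranslate u)))) {ε : ℝ} (hε : 0 < ε) :
    ∃ L : ℝ, 0 < L ∧ ∀ a : E, ∃ τ : E, dist a τ ≤ L ∧ ∀ x, |u (x + τ) - u x| ≤ ε := by
  have htb : TotallyBounded (Set.range (RTranslate u)) :=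
    (hap.totallyBounded).subset subset_closure
  obtain ⟨t, hts, htfin, hcov⟩ := finite_approx_of_totallyBounded htb ε hε
  classical
  -- choose translation vectors for elements of t
  have hex : ∀ v ∈ t, ∃ a : E, RTranslate u a = v := fun v hv => hts hv
  set f : (EuclideanSpace ℝ (Fin N) →ᵇ ℝ) → EuclideanSpace ℝ (Fin N) := fun v =>
    if h : ∃ a : E, RTranslate u a = v then h.choose else 0 with hf
  have hfspec : ∀ v ∈ t, RTranslate u (f v) = v := by
    intro v hv
    have h := hex v hv
    simp only [hf, dif_pos h]
    exact h.choose_spec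
  set T := htfin.toFinset with hT
  refine ⟨1 + ∑ v ∈ T, ‖f v‖, by positivity, fun a => ?_⟩
  have hmem : RTranslate u a ∈ ⋃ y ∈ t, ball y ε := hcov (Set.mem_range_self a)
  rw [Set.mem_iUnion₂] at hmem
  obtain ⟨v, hv, hdist⟩ := hmem
  refine ⟨a - f v, ?_, ?_⟩
  · have h1 : dist a (a - f v) = ‖f v‖ := by
      rw [dist_eq_norm]; simp
    rw [h1]
    have h2 : ‖f v‖ ≤ ∑ w ∈ T, ‖f w‖ :=
      Finset.single_le_sum (fun w _ => norm_nonneg (f w)) (by rw [hT]; exact htfin.mem_toFinset.2 hv)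
    linarith
  · intro x
    have h3 : u (x + (a - f v)) = (RTranslate u a) (x - f v) := by
      rw [RTranslate_apply]
      congr 1
      abel
    have h4 : u x = (RTranslate u (f v)) (x - f v) := by
      rw [RTranslate_apply]
      congr 1
      abel
    rw [h3, h4, hfspec v hv]
    have h5 := BoundedContinuousFunction.dist_coe_le_dist (f := RTranslate u a) (g := v) (x - f v)
    calc |(RTranslate u a) (x - f v) - v (x - f v)| = dist ((RTranslate u a) (x - f v)) (v (x - f v)) := by
          rw [Real.dist_eq]
      _ ≤ dist (RTranslate u a) v := h5
      _ ≤ ε := (mem_ball.1 hdist).le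


lemma fubini_core (u : E →ᵇ ℝ) {r R : ℝ} (hr : 0 < r) (hrR : r ≤ R) :
    IntegrableOn (fun a => ∫ y in ball a r, u y) (ball (0 : E) R) volume ∧
    |(∫ a in ball (0 : E) R, ∫ y in ball a r, u y) - V N r * ∫ y in ball (0 : E) (R - r), u y|
      ≤ ‖u‖ * V N r * (V N (R + r) - V N (R - r)) := by
  classical
  set S : Set (EuclideanSpace ℝ (Fin N) × EuclideanSpace ℝ (Fin N)) :=
    {p | dist p.1 0 < R} ∩ {p | dist p.2 p.1 < r} with hSdef
  have hSopen : IsOpen S := by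
    refine IsOpen.inter (isOpen_lt ?_ continuous_const) (isOpen_lt ?_ continuous_const)
    · exact (continuous_fst.dist continuous_const)
    · exact (continuous_snd.dist continuous_fst)
  have hSmeas : MeasurableSet S := hSopen.measurableSet
  have hSmem : ∀ p : EuclideanSpace ℝ (Fin N) × EuclideanSpace ℝ (Fin N),
      p ∈ S ↔ p.1 ∈ ball (0 : E) R ∧ p.2 ∈ ball p.1 r := by
    intro p; simp [hSdef, mem_ball, Set.mem_setOf_eq]
  set f : EuclideanSpace ℝ (Fin N) × EuclideanSpace ℝ (Fin N) → ℝ :=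
    S.indicator (fun p => u p.2) with hfdef
  -- integrability of f on the product
  have hbox : Integrable
      ((ball (0 : E) R ×ˢ ball (0 : E) (R + r)).indicator fun _ => ‖u‖)
      (volume.prod volume) := by
    rw [integrable_indicator_iff (measurableSet_ball.prod measurableSet_ball)]
    refine integrableOn_const ?_
    rw [Measure.prod_prod]
    exact (ENNReal.mul_lt_top measure_ball_lt_top measure_ball_lt_top).ne
  have hf : Integrable f (volume.prod volume) := by
    refine hbox.mono' ((u.continuous.comp continuous_snd).aestronglyMeasurable.indicator hSmeas) ?_
    refine Filter.Eventually.of_forall fun p => ?_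
    by_cases hp : p ∈ S
    · have hp' := (hSmem p).1 hp
      have hp2 : p ∈ ball (0 : E) R ×ˢ ball (0 : E) (R + r) := by
        refine ⟨hp'.1, ?_⟩
        have h1 := mem_ball.1 hp'.1
        have h2 := mem_ball.1 hp'.2
        rw [mem_ball]
        calc dist p.2 0 ≤ dist p.2 p.1 + dist p.1 0 := dist_triangle _ _ _
          _ < r + R := add_lt_add h2 h1
          _ = R + r := by ring
      rw [hfdef]
      simp only [Set.indicator_of_mem hp, Set.indicator_of_mem hp2]
      exact u.norm_coe_le_norm p.2
    · rw [hfdef]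
      simp only [Set.indicator_of_notMem hp, norm_zero]
      exact Set.indicator_nonneg (fun _ _ => norm_nonneg u) _
  -- marginal in a
  have hmarg : (fun a : EuclideanSpace ℝ (Fin N) => ∫ y, f (a, y)) =
      (ball (0 : E) R).indicator (fun a => ∫ y in ball a r, u y) := by
    funext a
    by_cases ha : a ∈ ball (0 : E) R
    · have hfa : (fun y => f (a, y)) = (ball a r).indicator (fun y => u y) := by
        funext y
        by_cases hy : y ∈ ball a r
        · rw [Set.indicator_of_mem hy, hfdef, Set.indicator_of_mem ((hSmem (a, y)).2 ⟨ha, hy⟩)]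
        · rw [Set.indicator_of_notMem hy, hfdef, Set.indicator_of_notMem]
          intro hmem
          exact hy ((hSmem (a, y)).1 hmem).2
      rw [hfa, integral_indicator measurableSet_ball, Set.indicator_of_mem ha]
    · have hfa : (fun y => f (a, y)) = fun _ => (0 : ℝ) := by
        funext y
        rw [hfdef, Set.indicator_of_notMem]
        intro hmem
        exact ha ((hSmem (a, y)).1 hmem).1
      rw [hfa, integral_zero, Set.indicator_of_notMem ha]
  -- integrability of marginal
  have hIntG : IntegrableOn (fun a => ∫ y in ball a r, u y) (ball (0 : E) R) volume := by
    have h := hf.integral_prod_left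
    rw [hmarg] at h
    exact (integrable_indicator_iff measurableSet_ball).1 h
  refine ⟨hIntG, ?_⟩
  -- marginal in y
  set m : EuclideanSpace ℝ (Fin N) → ℝ :=
    fun y => (volume (ball (0 : E) R ∩ ball y r)).toReal with hmdef
  have hmargy : (fun y : EuclideanSpace ℝ (Fin N) => ∫ a, f (a, y)) = fun y => m y * u y := by
    funext y
    have hfa : (fun a => f (a, y)) = (ball (0 : E) R ∩ ball y r).indicator (fun _ => u y) := by
      funext a
      by_cases ha : a ∈ ball (0 : E) R ∩ ball y r
      · rw [Set.indicator_of_mem ha, hfdef,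
          Set.indicator_of_mem ((hSmem (a, y)).2 ⟨ha.1, mem_ball_comm.1 ha.2⟩)]
      · rw [Set.indicator_of_notMem ha, hfdef, Set.indicator_of_notMem]
        intro hmem
        exact ha ⟨((hSmem (a, y)).1 hmem).1, mem_ball_comm.1 ((hSmem (a, y)).1 hmem).2⟩
    rw [hfa, integral_indicator_const (u y) (measurableSet_ball.inter measurableSet_ball),
      smul_eq_mul, hmdef]
    rfl
  -- Fubini swap
  have hswap : (∫ a, ∫ y, f (a, y)) = ∫ y, ∫ a, f (a, y) :=
    integral_integral_swap (f := fun a y => f (a, y)) hf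
  have hI : (∫ a in ball (0 : E) R, ∫ y in ball a r, u y) = ∫ y, m y * u y := by
    rw [← integral_indicator (measurableSet_ball), ← hmarg, hswap, hmargy]
  -- pointwise facts about m
  have hm_nonneg : ∀ y, 0 ≤ m y := fun y => ENNReal.toReal_nonneg
  have hm_le : ∀ y, m y ≤ V N r := by
    intro y
    have := ENNReal.toReal_mono (vol_ne_top y r) (measure_mono (Set.inter_subset_right
      (s := ball (0 : E) R) (t := ball y r)))
    rwa [vol_center y r] at this
  have hm_in : ∀ y ∈ ball (0 : E) (R - r), m y = V N r := by
    intro y hy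
    have hsub : ball y r ⊆ ball (0 : E) R := by
      intro z hz
      rw [mem_ball] at hz hy ⊢
      calc dist z 0 ≤ dist z y + dist y 0 := dist_triangle _ _ _
        _ < r + (R - r) := add_lt_add hz hy
        _ = R := by ring
    rw [hmdef]
    simp only
    rw [Set.inter_eq_self_of_subset_right hsub, vol_center]
    rfl
  have hm_out : ∀ y : EuclideanSpace ℝ (Fin N), y ∉ ball (0 : E) (R + r) → m y = 0 := by
    intro y hy
    have : ball (0 : E) R ∩ ball y r = ∅ := by
      rw [Set.eq_empty_iff_forall_notMem]
      intro a ⟨ha1, ha2⟩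
      rw [mem_ball] at ha1 ha2 hy
      push_neg at hy
      have : dist y 0 ≤ dist y a + dist a 0 := dist_triangle _ _ _
      rw [dist_comm y a] at this
      linarith
    rw [hmdef]
    simp only
    rw [this, measure_empty, ENNReal.toReal_zero]
  -- the comparison function
  set k : EuclideanSpace ℝ (Fin N) → ℝ :=
    fun y => m y * u y - (ball (0 : E) (R - r)).indicator (fun y => V N r * u y) y with hkdef
  have hInd_int : Integrable
      ((ball (0 : E) (R - r)).indicator (fun y => V N r * u y)) volume := by
    rw [integrable_indicator_iff measurableSet_ball]
    exact (u_intOn u (vol_ne_top 0 (R - r))).const_mul _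
  have hmu_int : Integrable (fun y => m y * u y) volume := by
    have h := hf.integral_prod_right
    rwa [hmargy] at h
  have hk_int : Integrable k volume := hmu_int.sub hInd_int
  have hbnd_int : Integrable
      ((ball (0 : E) (R + r) \ ball (0 : E) (R - r)).indicator fun _ => ‖u‖ * V N r)
      volume := by
    rw [integrable_indicator_iff (measurableSet_ball.diff measurableSet_ball)]
    refine integrableOn_const ?_
    exact ((measure_mono Set.diff_subset).trans_lt measure_ball_lt_top).ne
  have hsub_ball : ball (0 : E) (R - r) ⊆ ball (0 : E) (R + r) :=
    ball_subset_ball (by linarith)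
  have hbound : ∀ y, ‖k y‖ ≤
      ((ball (0 : E) (R + r) \ ball (0 : E) (R - r)).indicator fun _ => ‖u‖ * V N r) y := by
    intro y
    by_cases h1 : y ∈ ball (0 : E) (R - r)
    · have : k y = 0 := by
        rw [hkdef]
        simp only [Set.indicator_of_mem h1, hm_in y h1]
        ring
      rw [this, norm_zero]
      exact Set.indicator_nonneg (fun _ _ => mul_nonneg (norm_nonneg u) (V_nonneg r)) _
    · by_cases h2 : y ∈ ball (0 : E) (R + r)
      · have hky : k y = m y * u y := by
          rw [hkdef]; simp only [Set.indicator_of_notMem h1, sub_zero]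
        rw [hky, Set.indicator_of_mem (Set.mem_diff_of_mem h2 h1), Real.norm_eq_abs, abs_mul,
          abs_of_nonneg (hm_nonneg y)]
        rw [mul_comm (‖u‖) (V N r)]
        exact mul_le_mul (hm_le y) (u.norm_coe_le_norm y) (abs_nonneg _) (V_nonneg r)
      · have hky : k y = 0 := by
          rw [hkdef]
          simp only [Set.indicator_of_notMem h1, Set.indicator_of_notMem (fun h => h2 (hsub_ball h)), sub_zero, hm_out y h2, zero_mul]
        rw [hky, norm_zero, Set.indicator_of_notMem (fun h => h2 h.1)]
  have hmain := norm_integral_le_of_norm_le hbnd_int (Filter.Eventually.of_forall hbound)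
  have hint_bnd : (∫ y, ((ball (0 : E) (R + r) \ ball (0 : E) (R - r)).indicator
      fun _ => ‖u‖ * V N r) y) = (V N (R + r) - V N (R - r)) * (‖u‖ * V N r) := by
    rw [integral_indicator_const _ (measurableSet_ball.diff measurableSet_ball), smul_eq_mul]
    congr 1
    unfold Measure.real
    rw [measure_diff hsub_ball measurableSet_ball.nullMeasurableSet (vol_ne_top 0 (R - r)),
      ENNReal.toReal_sub_of_le (measure_mono hsub_ball) (vol_ne_top 0 (R + r))]
    rfl
  have hint_k : (∫ y, k y) = (∫ a in ball (0 : E) R, ∫ y in ball a r, u y)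
      - V N r * ∫ y in ball (0 : E) (R - r), u y := by
    rw [hkdef]
    rw [integral_sub hmu_int hInd_int, ← hI, integral_indicator measurableSet_ball,
      integral_const_mul]
  rw [← hint_k]
  calc |∫ y, k y| = ‖∫ y, k y‖ := (Real.norm_eq_abs _).symm
    _ ≤ _ := hmain
    _ = (V N (R + r) - V N (R - r)) * (‖u‖ * V N r) := hint_bnd
    _ = ‖u‖ * V N r * (V N (R + r) - V N (R - r)) := by ring


lemma abs_setIntegral_le'' {f : EuclideanSpace ℝ (Fin N) → ℝ} {s : Set (EuclideanSpace ℝ (Fin N))}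
    (hs : volume s ≠ ⊤) (hint : IntegrableOn f s volume) {C : ℝ} (hC : ∀ x, |f x| ≤ C) :
    |∫ y in s, f y| ≤ C * (volume s).toReal := by
  have := norm_setIntegral_le_of_norm_le_const (μ := volume) (s := s) (f := f)
    (C := C) (lt_top_iff_ne_top.2 hs) (fun x _ => hC x)
  simpa [Real.norm_eq_abs, Measure.real] using this

lemma avg_est (hN : 0 < N) (u : E →ᵇ ℝ) {r R : ℝ} (hr : 0 < r) (hrR : r ≤ R) {s : ℝ}
    (hs : ∀ a : E, |g u r a - g u r 0| ≤ s) :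
    |(∫ a in ball (0 : E) R, ∫ y in ball a r, u y) - V N R * ∫ y in ball (0 : E) r, u y|
      ≤ s * V N r * V N R := by
  obtain ⟨hIntG, -⟩ := fubini_core u hr hrR
  have hVr := V_pos hN hr
  have h2 : ∀ a : E, |(∫ y in ball a r, u y) - ∫ y in ball (0 : E) r, u y| ≤ s * V N r := by
    intro a
    have h := hs a
    rw [g_def, g_def, ← mul_sub, abs_mul, abs_of_nonneg (inv_nonneg.2 (V_nonneg r))] at h
    have h3 := mul_le_mul_of_nonneg_left h (V_nonneg (N := N) r)
    rw [← mul_assoc, mul_inv_cancel₀ hVr.ne', one_mul] at h3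
    linarith [h3]
  have hconst : V N R * ∫ y in ball (0 : E) r, u y
      = ∫ _ in ball (0 : E) R, (∫ y in ball (0 : E) r, u y) := by
    rw [setIntegral_const, smul_eq_mul]
    rfl
  rw [hconst, ← integral_sub hIntG (integrableOn_const measure_ball_lt_top.ne)]
  have := abs_setIntegral_le'' (f := fun a => (∫ y in ball a r, u y) - ∫ y in ball (0 : E) r, u y)
    (vol_ne_top 0 R) (hIntG.sub (integrableOn_const measure_ball_lt_top.ne)) h2
  exact this

lemma master (hN : 0 < N) (u : E →ᵇ ℝ) {r R : ℝ} (hr : 0 < r) (hrR : r ≤ R) {s : ℝ}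
    (hs : ∀ a : E, |g u r a - g u r 0| ≤ s) :
    |g u R 0 - g u r 0| ≤ s + 2 * ‖u‖ * (V N (R + r) - V N (R - r)) / V N R := by
  have hR : 0 < R := lt_of_lt_of_le hr hrR
  have hVr := V_pos hN hr
  have hVR := V_pos hN hR
  obtain ⟨hIntG, hfub⟩ := fubini_core u hr hrR
  have havg := avg_est hN u hr hrR hs
  set A := ∫ y in ball (0 : E) R, u y with hA
  set B := ∫ y in ball (0 : E) r, u y with hB
  set D := ∫ y in ball (0 : E) (R - r), u y with hD
  set I := ∫ a in ball (0 : E) R, ∫ y in ball a r, u y with hI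
  set Δ := V N (R + r) - V N (R - r) with hΔ
  have hΔ0 : 0 ≤ Δ := V_sub_nonneg (by linarith)
  have hAD : |A - D| ≤ ‖u‖ * Δ := by
    have h1 := nested_diff u (show R - r ≤ R by linarith) (0 : E)
      (fun x => u.norm_coe_le_norm x)
    refine h1.trans ?_
    have h2 : V N R ≤ V N (R + r) := V_mono (by linarith)
    have := norm_nonneg u
    rw [hΔ]
    nlinarith
  have key : |V N r * A - V N R * B| ≤ V N r * (‖u‖ * Δ) + ‖u‖ * V N r * Δ + s * V N r * V N R := by
    have e1 : V N r * A - V N R * B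
        = V N r * (A - D) + (V N r * D - I) + (I - V N R * B) := by ring
    rw [e1]
    have t1 : |V N r * (A - D)| ≤ V N r * (‖u‖ * Δ) := by
      rw [abs_mul, abs_of_pos hVr]
      exact mul_le_mul_of_nonneg_left hAD hVr.le
    have t2 : |V N r * D - I| ≤ ‖u‖ * V N r * Δ := by
      rw [abs_sub_comm]
      exact hfub
    calc |V N r * (A - D) + (V N r * D - I) + (I - V N R * B)|
        ≤ |V N r * (A - D) + (V N r * D - I)| + |I - V N R * B| := abs_add_le _ _
      _ ≤ |V N r * (A - D)| + |V N r * D - I| + |I - V N R * B| := by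
          have := abs_add_le (V N r * (A - D)) (V N r * D - I)
          linarith
      _ ≤ V N r * (‖u‖ * Δ) + ‖u‖ * V N r * Δ + s * V N r * V N R := by
          have := havg
          linarith [t1, t2]
  have e2 : g u R 0 - g u r 0 = (V N r * A - V N R * B) / (V N R * V N r) := by
    rw [g_def, g_def, ← hA, ← hB]
    field_simp
  rw [e2, abs_div, abs_of_pos (mul_pos hVR hVr), div_le_iff₀ (mul_pos hVR hVr)]
  refine key.trans (le_of_eq ?_)
  field_simp
  ring


lemma V_ratio (hN : 0 < N) {x R : ℝ} (hx : 0 ≤ x) (hxR : x ≤ R) (hR : 0 < R) :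
    (V N (R + x) - V N (R - x)) / V N R ≤ 2 ^ (N + 1) * (x / R) := by
  set t := x / R with ht
  have ht0 : 0 ≤ t := div_nonneg hx hR.le
  have ht1 : t ≤ 1 := (div_le_one hR).2 hxR
  have hV1 : 0 < V N 1 := V_pos hN one_pos
  have hRN : 0 < R ^ N := pow_pos hR N
  have e1 : R + x = R * (1 + t) := by rw [ht]; field_simp
  have e2 : R - x = R * (1 - t) := by rw [ht]; field_simp
  have key : (1 + t) ^ N - (1 - t) ^ N ≤ 2 ^ (N + 1) * t := by
    have hconv := (convexOn_pow N).2 (Set.mem_Ici.2 (by norm_num : (0:ℝ) ≤ 1))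
      (Set.mem_Ici.2 (by norm_num : (0:ℝ) ≤ 2)) (by linarith : (0:ℝ) ≤ 1 - t) ht0
      (by ring : (1 - t) + t = 1)
    simp only [smul_eq_mul] at hconv
    have hrw : (1 - t) * 1 + t * 2 = 1 + t := by ring
    rw [hrw, one_pow] at hconv
    have hb : (1:ℝ) + (N : ℝ) * (-t) ≤ (1 + (-t)) ^ N :=
      one_add_mul_le_pow (by linarith : (-2:ℝ) ≤ -t) N
    have hb' : (1:ℝ) - (N : ℝ) * t ≤ (1 - t) ^ N := by
      have : (1:ℝ) + (-t) = 1 - t := by ring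
      rw [this] at hb
      linarith
    have hNle : (N : ℝ) ≤ 2 ^ N := by
      have := Nat.lt_two_pow_self (n := N)
      exact_mod_cast this.le
    have h2 : (2:ℝ) ^ (N + 1) = 2 * 2 ^ N := by ring
    nlinarith [ht0, hNle]
  rw [V_scale hN (by linarith : (0:ℝ) ≤ R + x), V_scale hN (by linarith : (0:ℝ) ≤ R - x),
    V_scale hN hR.le, e1, e2, mul_pow, mul_pow]
  have hLHS : (R ^ N * (1 + t) ^ N * V N 1 - R ^ N * (1 - t) ^ N * V N 1) / (R ^ N * V N 1)
      = (1 + t) ^ N - (1 - t) ^ N := by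
    field_simp
  rw [hLHS]
  exact key

lemma abs_u_le (u : E →ᵇ ℝ) (x : E) : |u x| ≤ ‖u‖ := by
  rw [← Real.norm_eq_abs]; exact u.norm_coe_le_norm x

lemma sup_bound (hN : 0 < N) (u : E →ᵇ ℝ)
    (hap : IsCompact (closure (Set.range (RTranslate u)))) {ε : ℝ} (hε : 0 < ε) :
    ∃ r0 : ℝ, 0 < r0 ∧ ∀ r, r0 ≤ r → ∀ a : E, |g u r a - g u r 0| ≤ 2 * ε := by
  obtain ⟨L, hL, hper⟩ := almost_periods u hap hε
  set M := ‖u‖ with hM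
  have hM0 : 0 ≤ M := norm_nonneg u
  set C := (2:ℝ) ^ (N + 1) with hC
  have hC0 : 0 < C := by positivity
  refine ⟨max L (2 * M * C * L / ε) + 1, ?_, fun r hr a => ?_⟩
  · have : 0 < max L (2 * M * C * L / ε) := lt_of_lt_of_le hL (le_max_left _ _)
    linarith
  have hrL : L ≤ r := by
    have := le_max_left L (2 * M * C * L / ε)
    linarith
  have hr0 : 0 < r := lt_of_lt_of_le hL hrL
  have hrM : 2 * M * C * L / ε ≤ r := by
    have := le_max_right L (2 * M * C * L / ε)
    linarith
  obtain ⟨τ, hdist, hτ⟩ := hper a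
  have h1 : |g u r τ - g u r 0| ≤ ε := g_translate_est hN u hr0 τ hτ
  have h2 := g_shift hN u (abs_u_le u) hr0 a τ
  have hVr := V_pos hN hr0
  have h3 : V N r - V N (r - dist a τ) ≤ V N r - V N (r - L) := by
    have := V_mono (N := N) (show r - L ≤ r - dist a τ by linarith [hdist])
    linarith
  have h4 : (V N r - V N (r - L)) / V N r ≤ C * (L / r) := by
    have hrat := V_ratio hN hL.le hrL hr0
    have hmono : V N r ≤ V N (r + L) := V_mono (by linarith)
    calc (V N r - V N (r - L)) / V N r ≤ (V N (r + L) - V N (r - L)) / V N r :=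
          (div_le_div_iff_of_pos_right hVr).2 (by linarith)
      _ ≤ C * (L / r) := hrat
  have h5 : 2 * M * ((V N r - V N (r - dist a τ)) / V N r) ≤ ε := by
    have e1 : (V N r - V N (r - dist a τ)) / V N r ≤ C * (L / r) :=
      le_trans ((div_le_div_iff_of_pos_right hVr).2 h3) h4
    have e2 : 2 * M * C * L ≤ ε * r := by
      have := (div_le_iff₀ hε).1 hrM
      linarith
    have e3 : 2 * M * (C * (L / r)) ≤ ε := by
      rw [show 2 * M * (C * (L / r)) = 2 * M * C * L / r by ring, div_le_iff₀ hr0]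
      linarith
    calc 2 * M * ((V N r - V N (r - dist a τ)) / V N r) ≤ 2 * M * (C * (L / r)) := by
          refine mul_le_mul_of_nonneg_left e1 (by linarith)
      _ ≤ ε := e3
  have h6 : |g u r a - g u r τ| ≤ ε := by
    refine h2.trans ?_
    calc 2 * M * (V N r - V N (r - dist a τ)) / V N r
        = 2 * M * ((V N r - V N (r - dist a τ)) / V N r) := by ring
      _ ≤ ε := h5
  calc |g u r a - g u r 0| ≤ |g u r a - g u r τ| + |g u r τ - g u r 0| := abs_sub_le _ _ _
    _ ≤ ε + ε := add_le_add h6 h1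
    _ = 2 * ε := by ring


lemma close (hN : 0 < N) (u : E →ᵇ ℝ)
    (hap : IsCompact (closure (Set.range (RTranslate u)))) {ε : ℝ} (hε : 0 < ε) :
    ∃ r0 : ℝ, 0 < r0 ∧ (∀ r, r0 ≤ r → ∀ a : E, |g u r a - g u r 0| ≤ 2 * ε) ∧
      ∀ r, r0 ≤ r → ∀ r', r0 ≤ r' → |g u r 0 - g u r' 0| ≤ 6 * ε := by
  obtain ⟨r0, hr0, hsup⟩ := sup_bound hN u hap hε
  refine ⟨r0, hr0, hsup, fun r hr r' hr' => ?_⟩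
  set M := ‖u‖ with hM
  have hM0 : 0 ≤ M := norm_nonneg u
  set C := (2:ℝ) ^ (N + 1) with hC
  have hC0 : 0 < C := by positivity
  set mx := max r r' with hmx
  have hmxpos : 0 < mx := lt_of_lt_of_le (lt_of_lt_of_le hr0 hr) (le_max_left _ _)
  set R := mx + 2 * M * C * mx / ε + 1 with hR
  have hterm : 0 ≤ 2 * M * C * mx / ε := by positivity
  have key : ∀ ρ, r0 ≤ ρ → ρ ≤ mx → |g u R 0 - g u ρ 0| ≤ 3 * ε := by
    intro ρ hρ0 hρmx
    have hρpos : 0 < ρ := lt_of_lt_of_le hr0 hρ0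
    have hρR : ρ ≤ R := by
      rw [hR]; linarith
    have hRpos : 0 < R := lt_of_lt_of_le hρpos hρR
    have hm := master hN u hρpos hρR (fun a => hsup ρ hρ0 a)
    have hrat := V_ratio hN hρpos.le hρR hRpos
    have hfin : 2 * M * (V N (R + ρ) - V N (R - ρ)) / V N R ≤ ε := by
      have e0 : 2 * M * (V N (R + ρ) - V N (R - ρ)) / V N R
          = 2 * M * ((V N (R + ρ) - V N (R - ρ)) / V N R) := by ring
      have e1 : 2 * M * ((V N (R + ρ) - V N (R - ρ)) / V N R) ≤ 2 * M * (C * (ρ / R)) :=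
        mul_le_mul_of_nonneg_left hrat (by linarith)
      have e2 : 2 * M * C * mx ≤ ε * R := by
        have h1 : 2 * M * C * mx / ε ≤ R := by rw [hR]; linarith
        have := (div_le_iff₀ hε).1 h1
        linarith
      have e3 : 2 * M * (C * (ρ / R)) ≤ ε := by
        rw [show 2 * M * (C * (ρ / R)) = 2 * M * C * ρ / R by ring, div_le_iff₀ hRpos]
        have : 2 * M * C * ρ ≤ 2 * M * C * mx :=
          mul_le_mul_of_nonneg_left hρmx (by positivity)
        linarith
      rw [e0]
      exact e1.trans e3
    linarith
  have k1 := key r hr (le_max_left _ _)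
  have k2 := key r' hr' (le_max_right _ _)
  calc |g u r 0 - g u r' 0| ≤ |g u R 0 - g u r 0| + |g u R 0 - g u r' 0| := by
        rw [abs_sub_comm (g u R 0) (g u r 0)]
        exact abs_sub_le _ _ _
    _ ≤ 3 * ε + 3 * ε := add_le_add k1 k2
    _ = 6 * ε := by ring

end MVAux



/-- for every almost periodic `u : ℝ^N → ℝ` there is a constant `c` such
that the ball averages `(1/|B_r(a)|) ∫_{B_r(a)} u` converge to `c` as `r → ∞`,
uniformly with respect to the center `a ∈ ℝ^N`. -/
theorem mean_value_ball_averages {N : ℕ} (hN : 0 < N)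
    (u : EuclideanSpace ℝ (Fin N) →ᵇ ℝ)
    (hap : IsCompact (closure (Set.range (RTranslate u)))) :
    ∃ c : ℝ, ∀ ε > (0 : ℝ), ∃ R : ℝ, ∀ r ≥ R, ∀ a : EuclideanSpace ℝ (Fin N),
      |(volume (Metric.ball a r)).toReal⁻¹ * (∫ y in Metric.ball a r, u y) - c| < ε := by
  classical
  set seq : ℕ → ℝ := fun n => MVAux.g u ((n : ℝ) + 1) 0 with hseq
  have hcauchy : CauchySeq seq := by
    rw [Metric.cauchySeq_iff]
    intro ε hε
    have hε7 : 0 < ε / 7 := by linarith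
    obtain ⟨r0, hr0, -, hclose⟩ := MVAux.close hN u hap hε7
    refine ⟨⌈r0⌉₊, fun m hm n hn => ?_⟩
    have h1 : r0 ≤ (m : ℝ) + 1 := by
      have := Nat.le_ceil r0
      have h2 : (⌈r0⌉₊ : ℝ) ≤ (m : ℝ) := Nat.cast_le.2 hm
      linarith
    have h2 : r0 ≤ (n : ℝ) + 1 := by
      have := Nat.le_ceil r0
      have h3 : (⌈r0⌉₊ : ℝ) ≤ (n : ℝ) := Nat.cast_le.2 hn
      linarith
    rw [Real.dist_eq]
    have := hclose _ h1 _ h2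
    calc |seq m - seq n| ≤ 6 * (ε / 7) := this
      _ < ε := by linarith
  obtain ⟨c, hc⟩ := cauchySeq_tendsto_of_complete hcauchy
  refine ⟨c, fun ε hε => ?_⟩
  have hε10 : 0 < ε / 10 := by linarith
  obtain ⟨r0, hr0, hsup, hclose⟩ := MVAux.close hN u hap hε10
  obtain ⟨n0, hn0⟩ := Metric.tendsto_atTop.1 hc (ε / 10) hε10
  set n := max n0 ⌈r0⌉₊ with hn
  have hn_c : |seq n - c| < ε / 10 := by
    have := hn0 n (le_max_left _ _)
    rwa [Real.dist_eq] at this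
  have hn_r0 : r0 ≤ (n : ℝ) + 1 := by
    have h1 := Nat.le_ceil r0
    have h2 : (⌈r0⌉₊ : ℝ) ≤ (n : ℝ) := Nat.cast_le.2 (le_max_right _ _)
    linarith
  refine ⟨r0, fun r hrr a => ?_⟩
  show |MVAux.g u r a - c| < ε
  have e1 : |MVAux.g u r a - MVAux.g u r 0| ≤ 2 * (ε / 10) := hsup r hrr a
  have e2 : |MVAux.g u r 0 - seq n| ≤ 6 * (ε / 10) := hclose r hrr _ hn_r0
  calc |MVAux.g u r a - c|
      ≤ |MVAux.g u r a - MVAux.g u r 0| + |MVAux.g u r 0 - seq n| + |seq n - c| := by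
        have t1 := abs_sub_le (MVAux.g u r a) (MVAux.g u r 0) (seq n)
        have t2 := abs_sub_le (MVAux.g u r a) (seq n) c
        linarith
    _ < ε := by linarith
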